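/- For integers a, b, c with a > b ≥ 0 and c ≥ 1 and b ≤ a - c, one has the identity ∑_{i=b}^{a-c} (-1)^i · C(a, i+c) · C(i, b) = (-1)^b · C(a-b-1, c-1). -/

import Mathlib

open Finset

lemma core0 (b n : ℕ) :
    ∑ j ∈ Finset.range (n+1), (-1:ℤ)^j * ((b+n).choose (b+j)) * ((b+j).choose b)
    = if n = 0 then 1 else 0 := by
  have h : ∀ j ∈ Finset.range (n+1), (-1:ℤ)^j * ((b+n).choose (b+j)) * ((b+j).choose b)
      = ((b+n).choose b : ℤ) * ((-1)^j * (n.choose j)) := by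
    intro j hj
    have hj' : j ≤ n := by simpa [Nat.lt_succ_iff] using Finset.mem_range.mp hj
    have h2 := Nat.choose_mul (n := b+n) (k := b+j) (s := b) (by omega)
    simp only [Nat.add_sub_cancel_left] at h2
    have hz : ((b+n).choose (b+j) * (b+j).choose b : ℤ) = ((b+n).choose b * n.choose j : ℤ) := by
      exact_mod_cast congrArg (Nat.cast : ℕ → ℤ) h2
    linear_combination (-1:ℤ)^j * hz
  rw [Finset.sum_congr rfl h, ← Finset.mul_sum, Int.alternating_sum_range_choose]
  split_ifs with hn
  · subst hn; simp
  · simp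

lemma core (c b n : ℕ) :
    ∑ j ∈ Finset.range (n+1), (-1:ℤ)^j * ((b+(c+1)+n).choose (b+(c+1)+j)) * ((b+j).choose b)
    = (c+n).choose c := by
  induction c generalizing n with
  | zero =>
    induction n with
    | zero => simp
    | succ n ih =>
      have split : ∀ j ∈ Finset.range (n+2),
          (-1:ℤ)^j * ((b+1+(n+1)).choose (b+1+j)) * ((b+j).choose b)
          = (-1:ℤ)^j * ((b+1+n).choose (b+1+j)) * ((b+j).choose b)
            + (-1:ℤ)^j * ((b+(n+1)).choose (b+j)) * ((b+j).choose b) := by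
        intro j hj
        have heq : (b+1+(n+1)).choose (b+1+j)
            = (b+1+n).choose (b+1+j) + (b+(n+1)).choose (b+j) := by
          have e1 : b+1+(n+1) = (b+1+n)+1 := by omega
          have e2 : b+1+j = (b+j)+1 := by omega
          have e3 : b+(n+1) = b+1+n := by omega
          rw [e1, e2, Nat.choose_succ_succ', e3]
          omega
        rw [heq]
        push_cast
        ring
      rw [Finset.sum_congr rfl split, Finset.sum_add_distrib]
      have h1 : ∑ j ∈ Finset.range (n+2), (-1:ℤ)^j * ((b+1+n).choose (b+1+j)) * ((b+j).choose b)
          = ∑ j ∈ Finset.range (n+1), (-1:ℤ)^j * ((b+1+n).choose (b+1+j)) * ((b+j).choose b) := by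
        rw [Finset.sum_range_succ]
        have : (b+1+n).choose (b+1+(n+1)) = 0 := Nat.choose_eq_zero_of_lt (by omega)
        simp [this]
      rw [h1, ih, core0]
      simp
  | succ c ihc =>
    induction n with
    | zero => simp
    | succ n ihn =>
      have split : ∀ j ∈ Finset.range (n+2),
          (-1:ℤ)^j * ((b+(c+2)+(n+1)).choose (b+(c+2)+j)) * ((b+j).choose b)
          = (-1:ℤ)^j * ((b+(c+2)+n).choose (b+(c+2)+j)) * ((b+j).choose b)
            + (-1:ℤ)^j * ((b+(c+1)+(n+1)).choose (b+(c+1)+j)) * ((b+j).choose b) := by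
        intro j hj
        have heq : (b+(c+2)+(n+1)).choose (b+(c+2)+j)
            = (b+(c+2)+n).choose (b+(c+2)+j) + (b+(c+1)+(n+1)).choose (b+(c+1)+j) := by
          have e1 : b+(c+2)+(n+1) = (b+(c+2)+n)+1 := by omega
          have e2 : b+(c+2)+j = (b+(c+1)+j)+1 := by omega
          have e3 : b+(c+1)+(n+1) = b+(c+2)+n := by omega
          rw [e1, e2, Nat.choose_succ_succ', e3, ← e2]
          omega
        rw [heq]
        push_cast
        ring
      rw [Finset.sum_congr rfl split, Finset.sum_add_distrib]
      have h1 : ∑ j ∈ Finset.range (n+2), (-1:ℤ)^j * ((b+(c+2)+n).choose (b+(c+2)+j)) * ((b+j).choose b)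
          = ∑ j ∈ Finset.range (n+1), (-1:ℤ)^j * ((b+(c+2)+n).choose (b+(c+2)+j)) * ((b+j).choose b) := by
        rw [Finset.sum_range_succ]
        have : (b+(c+2)+n).choose (b+(c+2)+(n+1)) = 0 := Nat.choose_eq_zero_of_lt (by omega)
        simp [this]
      rw [h1, ihn, ihc (n+1)]
      have key : (c+1+(n+1)).choose (c+1) = (c+1+n).choose (c+1) + (c+(n+1)).choose c := by
        have e1 : c+1+(n+1) = (c+1+n)+1 := by omega
        have e2 : c+(n+1) = c+1+n := by omega
        rw [e1, Nat.choose_succ_succ', e2]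
        omega
      rw [key]
      push_cast
      ring

/-- Lemma (combin2): for `a > b`, `c ≥ 1`, `b ≤ a - c`,
`∑_{i=b}^{a-c} (-1)^i C(a, i+c) C(i, b) = (-1)^b C(a-b-1, c-1)`. -/
theorem combin2 (a b c : ℕ) (hab : b < a) (hc : 1 ≤ c) (hb : b ≤ a - c) :
    (∑ i ∈ Finset.Icc b (a - c),
        (-1 : ℤ) ^ i * (Nat.choose a (i + c)) * (Nat.choose i b)) =
      (-1 : ℤ) ^ b * (Nat.choose (a - b - 1) (c - 1)) := by

  by_cases hca : c ≤ a
  · obtain ⟨c', rfl⟩ : ∃ c', c = c' + 1 := ⟨c - 1, by omega⟩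
    set n := a - (c'+1) - b with hn
    have ha : a = b + (c'+1) + n := by omega
    have hac : a - (c'+1) = b + n := by omega
    have hre : Finset.Icc b (b + n)
        = Finset.map ⟨(b + ·), add_right_injective b⟩ (Finset.range (n+1)) := by
      ext x
      simp only [Finset.mem_Icc, Finset.mem_map, Finset.mem_range, Function.Embedding.coeFn_mk]
      constructor
      · rintro ⟨h1, h2⟩; exact ⟨x - b, by omega, by omega⟩
      · rintro ⟨y, hy, rfl⟩; omega
    rw [hac, hre, Finset.sum_map]
    simp only [Function.Embedding.coeFn_mk]
    have congr1 : ∀ j ∈ Finset.range (n+1),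
        (-1:ℤ)^(b+j) * (a.choose (b+j+(c'+1))) * ((b+j).choose b)
        = (-1:ℤ)^b * ((-1:ℤ)^j * ((b+(c'+1)+n).choose (b+(c'+1)+j)) * ((b+j).choose b)) := by
      intro j hj
      rw [ha]
      have : b + j + (c'+1) = b + (c'+1) + j := by omega
      rw [this, pow_add]
      ring
    rw [Finset.sum_congr rfl congr1, ← Finset.mul_sum, core]
    have : a - b - 1 = c' + n := by omega
    simp [this]
  · have ha0 : a - c = 0 := by omega
    have hb0 : b = 0 := by omega
    subst hb0
    rw [ha0]
    have h1 : a.choose c = 0 := Nat.choose_eq_zero_of_lt (by omega)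
    have h2 : (a - 1).choose (c-1) = 0 := Nat.choose_eq_zero_of_lt (by omega)
    simp [h1, h2]
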